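/- Let T be an infinite rooted tree, ψ : T → ℂ, m ≠ n natural numbers, and suppose the multiplication operator M_ψ : L^(m) → L^(n) is bounded with operator norm ‖M_ψ‖. Then for every vertex v ≠ o, |ψ(v⁻)|·Λ_n(|v|)/Λ_m(|v|) ≤ ‖M_ψ‖; i.e., ν_{ψ,m,n} ≤ ‖M_ψ‖ < ∞. -/

import Mathlib

open Real Filter

/-- Iterated logarithm: ℓ₀(x) = x, ℓ_{j+1}(x) = 1 + log ℓ_j(x). -/
noncomputable def ell : ℕ → ℝ → ℝ
  | 0, x => x
  | j + 1, x => 1 + Real.log (ell j x)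

/-- Λ_k(x) = ∏_{j=0}^{k-1} ℓ_j(x). -/
noncomputable def Lam (k : ℕ) (x : ℝ) : ℝ := ∏ j ∈ Finset.range k, ell j x

/-- Discrete derivative of f on a rooted tree given by a parent map:
`f v - f (parent v)` (automatically 0 at the root since `parent o = o`). -/
def Der {V : Type*} (parent : V → V) (f : V → ℂ) (v : V) : ℂ := f v - f (parent v)

/-- The set of values |f'(v)|·Λ_k(|v|) over v ≠ o; f ∈ L^(k) iff this set is bounded above. -/
def lipSet {V : Type*} (o : V) (parent : V → V) (depth : V → ℕ) (k : ℕ) (f : V → ℂ) : Set ℝ :=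
  {r | ∃ v, v ≠ o ∧ r = ‖Der parent f v‖ * Lam k (depth v)}

/-- ‖f‖_k = |f(o)| + sup_{v ≠ o} |f'(v)|·Λ_k(|v|). -/
noncomputable def lipNorm {V : Type*} (o : V) (parent : V → V) (depth : V → ℕ) (k : ℕ)
    (f : V → ℂ) : ℝ :=
  ‖f o‖ + sSup (lipSet o parent depth k f)

lemma ell_ge_one (j : ℕ) {x : ℝ} (hx : 1 ≤ x) : 1 ≤ ell j x := by
  induction j with
  | zero => exact hx
  | succ j ih => simpa [ell] using Real.log_nonneg ih

lemma ell_mono' (j : ℕ) {x y : ℝ} (hx : 1 ≤ x) (hxy : x ≤ y) : ell j x ≤ ell j y := by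
  induction j with
  | zero => exact hxy
  | succ j ih =>
    simp only [ell]
    have h1 := ell_ge_one j hx
    have h2 : Real.log (ell j x) ≤ Real.log (ell j y) := Real.log_le_log (by linarith) ih
    linarith

lemma Lam_ge_one (k : ℕ) {x : ℝ} (hx : 1 ≤ x) : 1 ≤ Lam k x := by
  have := Finset.prod_le_prod (f := fun _ : ℕ => (1 : ℝ)) (g := fun j => ell j x)
    (s := Finset.range k) (fun j _ => zero_le_one) (fun j _ => ell_ge_one j hx)
  simpa [Lam] using this

lemma Lam_mono' (k : ℕ) {x y : ℝ} (hx : 1 ≤ x) (hxy : x ≤ y) : Lam k x ≤ Lam k y :=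
  Finset.prod_le_prod (fun j _ => by linarith [ell_ge_one j hx]) (fun j _ => ell_mono' j hx hxy)

lemma ell_one (j : ℕ) : ell j 1 = 1 := by induction j <;> simp [ell, *]

lemma Lam_one (k : ℕ) : Lam k 1 = 1 := by simp [Lam, ell_one]

/-- If M_ψ : L^(m) → L^(n) is bounded with ‖M_ψ f‖_n ≤ C‖f‖_m, then
|ψ(v⁻)|·Λ_n(|v|)/Λ_m(|v|) ≤ C for every v ≠ o, i.e. ν_{ψ,m,n} ≤ ‖M_ψ‖. -/
theorem nu_le_opnorm {V : Type*} (o : V) (parent : V → V) (depth : V → ℕ)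
    (hpar : parent o = o) (hdepth0 : depth o = 0)
    (hdepth : ∀ v, v ≠ o → depth v = depth (parent v) + 1)
    (hchild : ∀ v, ∃ w, w ≠ o ∧ parent w = v)
    (ψ : V → ℂ) (m n : ℕ) (hmn : m ≠ n) (C : ℝ)
    (hbdd : ∀ f : V → ℂ, BddAbove (lipSet o parent depth m f) →
      BddAbove (lipSet o parent depth n (fun v => ψ v * f v)) ∧
      lipNorm o parent depth n (fun v => ψ v * f v) ≤ C * lipNorm o parent depth m f) :
    ∀ v, v ≠ o → ‖ψ (parent v)‖ * Lam n (depth v) / Lam m (depth v) ≤ C := by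
  classical
  -- Step 1: test with the constant function 1 to get |ψ(o)| ≤ C (and so 0 ≤ C).
  have hone : lipSet o parent depth m (fun _ => (1 : ℂ)) = {0} := by
    ext r
    constructor
    · rintro ⟨w, hw, rfl⟩; simp [Der]
    · rintro rfl
      obtain ⟨w, hw, -⟩ := hchild o
      exact ⟨w, hw, by simp [Der]⟩
  have hb1 : BddAbove (lipSet o parent depth m (fun _ => (1 : ℂ))) := by
    rw [hone]; exact bddAbove_singleton
  obtain ⟨hbA, hbN⟩ := hbdd (fun _ => 1) hb1
  have hnorm1 : lipNorm o parent depth m (fun _ => (1 : ℂ)) = 1 := by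
    simp [lipNorm, hone]
  rw [hnorm1, mul_one] at hbN
  have hψo_le : ‖ψ o‖ ≤ C := by
    have hnonneg : 0 ≤ sSup (lipSet o parent depth n (fun v => ψ v * 1)) := by
      obtain ⟨w, hw, hpw⟩ := hchild o
      have hmem : ‖Der parent (fun v => ψ v * 1) w‖ * Lam n (depth w)
          ∈ lipSet o parent depth n (fun v => ψ v * 1) := ⟨w, hw, rfl⟩
      have h1 : (1 : ℝ) ≤ (depth w : ℝ) := by
        have hd := hdepth w hw
        rw [hpw, hdepth0] at hd
        rw [hd]; norm_num
      have hle := le_csSup hbA hmem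
      have h0 : (0 : ℝ) ≤ ‖Der parent (fun v => ψ v * 1) w‖ * Lam n (depth w) := by
        have := Lam_ge_one n h1
        positivity
      linarith
    have h1 : ‖ψ o‖ ≤ lipNorm o parent depth n (fun v => ψ v * 1) := by
      unfold lipNorm
      have he : ((fun v => ψ v * 1) o) = ψ o := by simp
      rw [he]
      linarith
    linarith
  have hC : 0 ≤ C := le_trans (norm_nonneg _) hψo_le
  intro v hv
  by_cases hu : parent v = o
  · rw [hu]
    have hdv : depth v = 1 := by rw [hdepth v hv, hu, hdepth0]
    rw [hdv]
    simpa [Lam_one] using hψo_le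
  · set u := parent v with hu_def
    set D : ℕ := depth v with hD
    have hDu : D = depth u + 1 := hdepth v hv
    have hdu1 : (1 : ℝ) ≤ (depth u : ℝ) := by
      have := hdepth u hu
      rw [this]; push_cast; linarith [Nat.cast_nonneg (α := ℝ) (depth (parent u))]
    have hD1 : (1 : ℝ) ≤ (D : ℝ) := by
      rw [hDu]; push_cast; linarith [Nat.cast_nonneg (α := ℝ) (depth u)]
    have hLmD : (0 : ℝ) < Lam m D := lt_of_lt_of_le one_pos (Lam_ge_one m hD1)
    set c : ℝ := (Lam m D)⁻¹ with hc
    have hc_pos : 0 < c := inv_pos.2 hLmD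
    set f : V → ℂ := fun w => if w = u then (c : ℂ) else 0 with hf
    -- every element of lipSet m f is ≤ 1
    have hbound : ∀ r ∈ lipSet o parent depth m f, r ≤ 1 := by
      rintro r ⟨w, hw, rfl⟩
      have hdw : depth w = depth (parent w) + 1 := hdepth w hw
      by_cases h1 : w = u
      · have hpw : parent w ≠ u := by
          intro h
          rw [h, ← h1] at hdw
          omega
        have : Der parent f w = (c : ℂ) := by
          simp only [Der, hf]
          rw [if_pos h1, if_neg hpw, sub_zero]
        rw [this]
        have habs : ‖((c : ℝ) : ℂ)‖ = c := by
          rw [Complex.norm_real, Real.norm_eq_abs, abs_of_pos hc_pos]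
        rw [habs]
        have hdw' : depth w = depth u := by rw [h1]
        have hle : Lam m (depth w) ≤ Lam m D := by
          rw [hdw']
          apply Lam_mono' m hdu1
          rw [hDu]; push_cast; linarith
        calc c * Lam m (depth w) ≤ c * Lam m D := by
              apply mul_le_mul_of_nonneg_left hle (le_of_lt hc_pos)
          _ = 1 := inv_mul_cancel₀ (ne_of_gt hLmD)
      · by_cases h2 : parent w = u
        · have : Der parent f w = -(c : ℂ) := by
            simp only [Der, hf]
            rw [if_neg h1, if_pos h2, zero_sub]
          rw [this]
          have habs : ‖(-(c : ℝ) : ℂ)‖ = c := by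
            rw [norm_neg, Complex.norm_real, Real.norm_eq_abs, abs_of_pos hc_pos]
          rw [habs]
          have hdw' : (depth w : ℝ) = (D : ℝ) := by
            rw [hdw, h2, hDu]
          rw [hdw']
          exact le_of_eq (inv_mul_cancel₀ (ne_of_gt hLmD))
        · have : Der parent f w = 0 := by
            simp only [Der, hf]
            rw [if_neg h1, if_neg h2, sub_zero]
          rw [this]
          simp
    have hbddf : BddAbove (lipSet o parent depth m f) := ⟨1, fun r hr => hbound r hr⟩
    obtain ⟨hgA, hgN⟩ := hbdd f hbddf
    -- lipNorm m f ≤ 1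
    have hfo : f o = 0 := by simp [hf, Ne.symm hu]
    have hnormf : lipNorm o parent depth m f ≤ 1 := by
      unfold lipNorm
      rw [hfo]
      simp only [norm_zero, zero_add]
      exact Real.sSup_le hbound zero_le_one
    -- lower bound element via a child of u
    obtain ⟨w, hw, hpw⟩ := hchild u
    have hdw : depth w = D := by rw [hdepth w hw, hpw, hDu]
    have hwu : w ≠ u := by
      intro h; rw [h] at hdw; omega
    have hDer : Der parent (fun x => ψ x * f x) w = -(ψ u * (c : ℂ)) := by
      simp only [Der, hf]
      rw [hpw, if_neg hwu, if_pos rfl, mul_zero, zero_sub]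
    have hmem : ‖ψ u‖ * c * Lam n (depth w)
        ∈ lipSet o parent depth n (fun x => ψ x * f x) := by
      refine ⟨w, hw, ?_⟩
      rw [hDer]
      rw [norm_neg, norm_mul, Complex.norm_real, Real.norm_eq_abs, abs_of_pos hc_pos]
    have hle1 := le_csSup hgA hmem
    have hgo : ‖(fun x => ψ x * f x) o‖ = 0 := by simp [hfo]
    have hle2 : ‖ψ u‖ * c * Lam n (depth w)
        ≤ lipNorm o parent depth n (fun x => ψ x * f x) := by
      unfold lipNorm
      rw [hgo, zero_add]
      exact hle1
    have hfinal : ‖ψ u‖ * c * Lam n D ≤ C := by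
      rw [← hdw]
      calc ‖ψ u‖ * c * Lam n (depth w)
          ≤ lipNorm o parent depth n (fun x => ψ x * f x) := hle2
        _ ≤ C * lipNorm o parent depth m f := hgN
        _ ≤ C * 1 := mul_le_mul_of_nonneg_left hnormf hC
        _ = C := mul_one C
    calc ‖ψ u‖ * Lam n D / Lam m D
        = ‖ψ u‖ * c * Lam n D := by
          rw [hc]; ring
      _ ≤ C := hfinal
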